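/- Suppose φ satisfies the stated assumption and the kernel assumption holds. Then the minimization problem min_{x ∈ ℝ^N} F(x) has at least one solution, i.e., there exists x* ∈ ℝ^N with F(x*) ≤ F(x) for all x ∈ ℝ^N. -/

import Mathlib

set_option maxHeartbeats 1000000


/-- The dot product `gᵀ x` of two vectors in `ℝ^N`. -/
noncomputable def dotp {N : ℕ} (g x : Fin N → ℝ) : ℝ := ∑ l, g l * x l

/-- The Euclidean norm `‖x‖₂` on `ℝ^N`. -/
noncomputable def norm2 {N : ℕ} (x : Fin N → ℝ) : ℝ := Real.sqrt (∑ l, (x l) ^ 2)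

/-- Assumptions on the potential function `φ` (with derivative `φ'` on `(0,∞)`):
continuous, concave and coercive on `[0,∞)` with `φ(0) = 0`; continuously
differentiable on `(0,∞)` with positive derivative there, `φ'(0⁺) = +∞`, and
`φ'` Lipschitz on every `[α,∞)` with `α > 0`. -/
structure PhiAssumption (φ φ' : ℝ → ℝ) : Prop where
  nonneg : ∀ t : ℝ, 0 ≤ t → 0 ≤ φ t
  zero : φ 0 = 0
  cont : ContinuousOn φ (Set.Ici 0)
  concave : ConcaveOn ℝ (Set.Ici 0) φ
  coercive : Filter.Tendsto φ Filter.atTop Filter.atTop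
  hasDeriv : ∀ t : ℝ, 0 < t → HasDerivAt φ (φ' t) t
  derivCont : ContinuousOn φ' (Set.Ioi 0)
  derivPos : ∀ t : ℝ, 0 < t → 0 < φ' t
  derivAtZero : Filter.Tendsto φ' (nhdsWithin 0 (Set.Ioi 0)) Filter.atTop
  derivLip : ∀ α : ℝ, 0 < α → ∃ L : ℝ, ∀ s : ℝ, α ≤ s → ∀ t : ℝ, α ≤ t →
    |φ' s - φ' t| ≤ L * |s - t|

/-- The objective function
`F(x) = Σ_{i∈J} φ(|G_iᵀ x|) + (β/q) ‖Ax − b‖_q^q`. -/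
noncomputable def objF {M N : ℕ} {ι : Type} [Fintype ι] (φ : ℝ → ℝ)
    (A : Matrix (Fin M) (Fin N) ℝ) (b : Fin M → ℝ) (G : ι → Fin N → ℝ)
    (β q : ℝ) (x : Fin N → ℝ) : ℝ :=
  (∑ i : ι, φ |dotp (G i) x|) + (β / q) * ∑ l, |A.mulVec x l - b l| ^ q


noncomputable def dotpL {N : ℕ} (g : Fin N → ℝ) : (Fin N → ℝ) →ₗ[ℝ] ℝ where
  toFun x := dotp g x
  map_add' x y := by simp [dotp, mul_add, Finset.sum_add_distrib]
  map_smul' c x := by simp [dotp, Finset.mul_sum, mul_left_comm]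

section Aux



variable {φ φ' : ℝ → ℝ}

lemma phi_mono (hφ : PhiAssumption φ φ') : MonotoneOn φ (Set.Ici 0) := by
  apply StrictMonoOn.monotoneOn
  apply strictMonoOn_of_deriv_pos (convex_Ici 0) hφ.cont
  intro t ht
  rw [interior_Ici] at ht
  rw [(hφ.hasDeriv t ht).deriv]
  exact hφ.derivPos t ht

lemma phi_subadd (hφ : PhiAssumption φ φ') :
    ∀ a b : ℝ, 0 ≤ a → 0 ≤ b → φ (a + b) ≤ φ a + φ b := by
  intro a b ha hb
  rcases eq_or_lt_of_le (by linarith : (0:ℝ) ≤ a + b) with h | h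
  · simp [← h, hφ.zero]
    nlinarith [hφ.nonneg a ha, hφ.nonneg b hb]
  · have h1 : φ a ≥ (a / (a+b)) * φ (a+b) := by
      have := hφ.concave.2 (Set.mem_Ici.2 (le_of_lt h)) (Set.mem_Ici.2 le_rfl)
        (by positivity : 0 ≤ a / (a+b)) (by positivity : 0 ≤ b / (a+b))
        (by field_simp)
      simp only [smul_eq_mul, mul_zero, add_zero, hφ.zero] at this
      rw [div_mul_cancel₀ _ (ne_of_gt h)] at this
      linarith
    have h2 : φ b ≥ (b / (a+b)) * φ (a+b) := by
      have := hφ.concave.2 (Set.mem_Ici.2 (le_of_lt h)) (Set.mem_Ici.2 le_rfl)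
        (by positivity : 0 ≤ b / (a+b)) (by positivity : 0 ≤ a / (a+b))
        (by field_simp; ring)
      simp only [smul_eq_mul, mul_zero, add_zero, hφ.zero] at this
      rw [div_mul_cancel₀ _ (ne_of_gt h)] at this
      linarith
    have : (a / (a+b)) * φ (a+b) + (b / (a+b)) * φ (a+b) = φ (a+b) := by
      field_simp
    linarith

lemma phi_sum (hφ : PhiAssumption φ φ') {κ : Type*} (s : Finset κ) (t : κ → ℝ)
    (ht : ∀ j, 0 ≤ t j) : φ (∑ j ∈ s, t j) ≤ ∑ j ∈ s, φ (t j) := by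
  classical
  induction s using Finset.induction with
  | empty => simp [hφ.zero]
  | insert a s' hj ih =>
    rw [Finset.sum_insert hj, Finset.sum_insert hj]
    calc φ (t a + ∑ j ∈ s', t j) ≤ φ (t a) + φ (∑ j ∈ s', t j) :=
          phi_subadd hφ _ _ (ht a) (Finset.sum_nonneg fun j _ => ht j)
      _ ≤ _ := by linarith

lemma phi_nat (hφ : PhiAssumption φ φ') : ∀ n : ℕ, φ n ≤ n * φ 1 := by
  intro n
  induction n with
  | zero => simp [hφ.zero]
  | succ n ih =>
    push_cast
    calc φ (n + 1) ≤ φ n + φ 1 := phi_subadd hφ _ _ (by positivity) zero_le_one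
      _ ≤ (n + 1) * φ 1 := by linarith

lemma phi_linear (hφ : PhiAssumption φ φ') (t : ℝ) (ht : 0 ≤ t) :
    φ t ≤ (t + 1) * φ 1 := by
  have h1 : φ t ≤ φ (⌈t⌉₊ : ℝ) :=
    phi_mono hφ (Set.mem_Ici.2 ht) (Set.mem_Ici.2 (by positivity)) (Nat.le_ceil t)
  have h2 := phi_nat hφ ⌈t⌉₊
  have h3 : (⌈t⌉₊ : ℝ) ≤ t + 1 := le_of_lt (Nat.ceil_lt_add_one ht)
  have h4 : 0 ≤ φ 1 := hφ.nonneg 1 zero_le_one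
  nlinarith

lemma abs_le_one_add_rpow (y q : ℝ) (hq : 1 ≤ q) : |y| ≤ 1 + |y| ^ q := by
  rcases le_or_gt (|y|) 1 with h | h
  · have : (0:ℝ) ≤ |y| ^ q := Real.rpow_nonneg (abs_nonneg y) q
    linarith
  · have h1 : |y| ^ (1:ℝ) ≤ |y| ^ q :=
      Real.rpow_le_rpow_of_exponent_le (le_of_lt h) hq
    rw [Real.rpow_one] at h1
    linarith



end Aux

/-- under the assumptions on `φ` and the kernel assumption,
the minimization problem `min_x F(x)` has at least one solution. -/
theorem existence_of_minimizer {M N : ℕ} (hM : 0 < M) (hN : 0 < N)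
    {ι : Type} [Fintype ι]
    (A : Matrix (Fin M) (Fin N) ℝ) (b : Fin M → ℝ) (G : ι → Fin N → ℝ)
    (β q : ℝ) (hβ : 0 < β) (hq : 1 ≤ q)
    (φ φ' : ℝ → ℝ) (hφ : PhiAssumption φ φ')
    (hker : ∀ x : Fin N → ℝ, A.mulVec x = 0 → (∀ i : ι, dotp (G i) x = 0) → x = 0) :
    ∃ xstar : Fin N → ℝ, ∀ x : Fin N → ℝ,
      objF φ A b G β q xstar ≤ objF φ A b G β q x := by
  have hq0 : 0 < q := lt_of_lt_of_le zero_lt_one hq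
  have hβq : 0 < β / q := div_pos hβ hq0
  -- the injective linear map
  let L : (Fin N → ℝ) →ₗ[ℝ] ((Fin M → ℝ) × (ι → ℝ)) :=
    (Matrix.mulVecLin A).prod (LinearMap.pi fun i => dotpL (G i))
  have hLker : LinearMap.ker L = ⊥ := by
    rw [LinearMap.ker_eq_bot']
    intro x hx
    have h1 : A.mulVec x = 0 := congrArg Prod.fst hx
    have h2 : ∀ i : ι, dotp (G i) x = 0 := fun i => congrFun (congrArg Prod.snd hx) i
    exact hker x h1 h2
  obtain ⟨K, hK0, hKa⟩ := L.exists_antilipschitzWith hLker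
  set c : ℝ := (K : ℝ) with hc_def
  have hc : 0 < c := hK0
  -- antilipschitz bound
  have hanti : ∀ x : Fin N → ℝ, ‖x‖ ≤ c * ‖L x‖ := by
    intro x
    have := hKa.le_mul_dist x 0
    simpa [dist_zero_right, map_zero] using this
  -- norm of L x bounded by the sum of absolute values
  have hLnorm : ∀ x : Fin N → ℝ,
      ‖L x‖ ≤ (∑ l, |A.mulVec x l|) + ∑ i, |dotp (G i) x| := by
    intro x
    have hA : ∀ l, |A.mulVec x l| ≤ ∑ l', |A.mulVec x l'| := fun l =>
      Finset.single_le_sum (f := fun l' => |A.mulVec x l'|)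
        (fun l' _ => abs_nonneg _) (Finset.mem_univ l)
    have hG : ∀ i, |dotp (G i) x| ≤ ∑ i', |dotp (G i') x| := fun i =>
      Finset.single_le_sum (f := fun i' => |dotp (G i') x|)
        (fun i' _ => abs_nonneg _) (Finset.mem_univ i)
    have hAp : (0:ℝ) ≤ ∑ l', |A.mulVec x l'| := Finset.sum_nonneg fun _ _ => abs_nonneg _
    have hGp : (0:ℝ) ≤ ∑ i', |dotp (G i') x| := Finset.sum_nonneg fun _ _ => abs_nonneg _
    rw [Prod.norm_def]
    apply max_le
    · refine le_trans ((pi_norm_le_iff_of_nonneg hAp).2 fun l => ?_) (by linarith)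
      simpa [L, Real.norm_eq_abs] using hA l
    · refine le_trans ((pi_norm_le_iff_of_nonneg hGp).2 fun i => ?_) (by linarith)
      exact (show ‖dotp (G i) x‖ ≤ ∑ i', |dotp (G i') x| by simpa [Real.norm_eq_abs] using hG i)
  -- notation
  set B : ℝ := ∑ l, |b l| with hB_def
  have hB : 0 ≤ B := Finset.sum_nonneg fun _ _ => abs_nonneg _
  set K₀ : ℝ := (M : ℝ) + B with hK0_def
  have hK₀ : 0 ≤ K₀ := by positivity
  set φ1 : ℝ := φ 1 with hφ1_def
  have hφ1 : 0 ≤ φ1 := hφ.nonneg 1 zero_le_one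
  set C : ℝ := 1 + φ1 * q / β with hC_def
  have hC : 0 < C := by positivity
  set D : ℝ := φ K₀ + φ1 with hD_def
  -- key coercivity inequality
  have key : ∀ x : Fin N → ℝ, φ (‖x‖ / c) ≤ C * objF φ A b G β q x + D := by
    intro x
    set S : ℝ := ∑ i, φ |dotp (G i) x| with hS_def
    set S' : ℝ := ∑ i, |dotp (G i) x| with hS'_def
    set P : ℝ := ∑ l, |A.mulVec x l - b l| ^ q with hP_def
    have hS'0 : 0 ≤ S' := Finset.sum_nonneg fun _ _ => abs_nonneg _
    have hP0 : 0 ≤ P := Finset.sum_nonneg fun _ _ => Real.rpow_nonneg (abs_nonneg _) _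
    have hS0 : 0 ≤ S := Finset.sum_nonneg fun i _ => hφ.nonneg _ (abs_nonneg _)
    -- ∑ |Ax_l| ≤ K₀ + P
    have hAx : (∑ l, |A.mulVec x l|) ≤ K₀ + P := by
      have h1 : ∀ l, |A.mulVec x l| ≤ |A.mulVec x l - b l| + |b l| := by
        intro l
        calc |A.mulVec x l| = |(A.mulVec x l - b l) + b l| := by ring_nf
          _ ≤ _ := abs_add_le _ _
      have h2 : ∀ l, |A.mulVec x l - b l| ≤ 1 + |A.mulVec x l - b l| ^ q :=
        fun l => abs_le_one_add_rpow _ q hq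
      calc (∑ l, |A.mulVec x l|) ≤ ∑ l, ((1 + |A.mulVec x l - b l| ^ q) + |b l|) := by
            apply Finset.sum_le_sum
            intro l _
            have := h1 l; have := h2 l; linarith
        _ = K₀ + P := by
            rw [Finset.sum_add_distrib, Finset.sum_add_distrib, Finset.sum_const]
            simp [hK0_def, hB_def, hP_def]
            ring_nf
    have h1 : ‖x‖ / c ≤ S' + (K₀ + P) := by
      rw [div_le_iff₀ hc]
      calc ‖x‖ ≤ c * ‖L x‖ := hanti x
        _ ≤ c * ((∑ l, |A.mulVec x l|) + S') := by
            apply mul_le_mul_of_nonneg_left (hLnorm x) (le_of_lt hc)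
        _ ≤ c * (S' + (K₀ + P)) := by
            apply mul_le_mul_of_nonneg_left _ (le_of_lt hc)
            linarith [hAx]
        _ = (S' + (K₀ + P)) * c := by ring
    have h2 : φ (‖x‖ / c) ≤ φ (S' + (K₀ + P)) :=
      phi_mono hφ (Set.mem_Ici.2 (by positivity)) (Set.mem_Ici.2 (by linarith)) h1
    have h3 : φ (S' + (K₀ + P)) ≤ φ S' + (φ K₀ + φ P) := by
      calc φ (S' + (K₀ + P)) ≤ φ S' + φ (K₀ + P) :=
            phi_subadd hφ _ _ hS'0 (by linarith)
        _ ≤ φ S' + (φ K₀ + φ P) := by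
            linarith [phi_subadd hφ K₀ P hK₀ hP0]
    have h4 : φ S' ≤ S := by
      rw [hS'_def, hS_def]
      exact phi_sum hφ _ _ fun i => abs_nonneg _
    have h5 : φ P ≤ (P + 1) * φ1 := phi_linear hφ P hP0
    have hid : φ1 * q / β * (β / q * P) = φ1 * P := by
      field_simp
    have hobj : objF φ A b G β q x = S + β / q * P := by
      simp [objF, hS_def, hP_def]
    rw [hobj]
    have hT0 : 0 ≤ β / q * P := by positivity
    have hs2 : 0 ≤ φ1 * q / β * S := by positivity
    have e1 : C * (S + β / q * P)
        = S + β / q * P + φ1 * q / β * S + φ1 * q / β * (β / q * P) := by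
      rw [hC_def]; ring
    linarith [h2, h3, h4, h5, e1, hid, hT0, hs2]
  -- continuity of the objective
  have hFcont : Continuous (objF φ A b G β q (M := M) (N := N) (ι := ι)) := by
    apply Continuous.add
    · apply continuous_finset_sum
      intro i _
      apply hφ.cont.comp_continuous
      · have hd : Continuous fun x : Fin N → ℝ => dotp (G i) x := by
          unfold dotp
          exact continuous_finset_sum _ fun l _ => continuous_const.mul (continuous_apply l)
        exact continuous_abs.comp hd
      · exact fun x => Set.mem_Ici.2 (abs_nonneg _)
    · apply Continuous.mul continuous_const
      apply continuous_finset_sum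
      intro l _
      apply Continuous.rpow_const
      · apply Continuous.abs
        apply Continuous.sub _ continuous_const
        have hd : Continuous fun x : Fin N → ℝ => A.mulVec x l := by
          simp only [Matrix.mulVec, dotProduct]
          exact continuous_finset_sum _ fun j _ => continuous_const.mul (continuous_apply j)
        exact hd
      · exact fun x => Or.inr (le_of_lt hq0)
  -- coercivity
  have hcoer : Filter.Tendsto (objF φ A b G β q (M := M) (N := N) (ι := ι))
      (Filter.cocompact _) Filter.atTop := by
    apply Filter.tendsto_atTop_mono
      (f := fun x : Fin N → ℝ => (φ (‖x‖ / c) - D) / C)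
    · intro x
      rw [div_le_iff₀ hC]
      have := key x
      nlinarith [key x]
    · apply Filter.Tendsto.atTop_div_const hC
      have t1 : Filter.Tendsto (fun x : Fin N → ℝ => ‖x‖) (Filter.cocompact _)
          Filter.atTop := tendsto_norm_cocompact_atTop
      have t2 := t1.atTop_div_const hc
      have t3 := hφ.coercive.comp t2
      have t4 := Filter.tendsto_atTop_add_const_right _ (-D) t3
      exact t4.congr fun x => by simp only [Function.comp_apply]; ring
  exact hFcont.exists_forall_le hcoer
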